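/- Let X be a finite-dimensional normed space over ℝ or ℂ, let 1 ≤ p < ∞, and let {τ_j}_{j=1}^n and {ω_k}_{k=1}^m be Parseval p-frames for the dual X*. Then 1/(nm)^{1/p} ≤ sup_{g ∈ X*, ‖g‖=1} max_{1≤j≤n, 1≤k≤m} |g(τ_j) g(ω_k)|. -/

import Mathlib

lemma aux_rpow_inv_le (p : ℝ) (hp : 0 < p) {a c : ℝ} (ha : 0 ≤ a) (hc : 0 ≤ c)
    (h : c ≤ a ^ p) : c ^ (1 / p) ≤ a := by
  calc c ^ (1 / p) ≤ (a ^ p) ^ (1 / p) := Real.rpow_le_rpow hc h (by positivity)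
    _ = a ^ (p * (1 / p)) := (Real.rpow_mul ha _ _).symm
    _ = a := by rw [mul_one_div, div_self hp.ne', Real.rpow_one]

theorem stmt_10 {𝕜 X : Type*} [RCLike 𝕜] [NormedAddCommGroup X] [NormedSpace 𝕜 X]
    [FiniteDimensional 𝕜 X] [Nontrivial X]
    (p : ℝ) (hp : 1 ≤ p) {n m : ℕ}
    (τ : Fin n → X) (ω : Fin m → X)
    (hτ : ∀ f : X →L[𝕜] 𝕜, ‖f‖ ^ p = ∑ j, ‖f (τ j)‖ ^ p)
    (hω : ∀ f : X →L[𝕜] 𝕜, ‖f‖ ^ p = ∑ k, ‖f (ω k)‖ ^ p) :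
    1 / ((n * m : ℝ) ^ (1 / p)) ≤
      ⨆ g : {g : X →L[𝕜] 𝕜 // ‖g‖ = 1}, ⨆ j, ⨆ k, ‖(g : X →L[𝕜] 𝕜) (τ j)‖ * ‖(g : X →L[𝕜] 𝕜) (ω k)‖ := by
  have hp0 : 0 < p := lt_of_lt_of_le one_pos hp
  -- a unit-norm functional exists
  obtain ⟨x, hx⟩ := exists_ne (0 : X)
  obtain ⟨g₀, hg₀, -⟩ := exists_dual_vector 𝕜 x (norm_ne_zero_iff.mpr hx)
  -- for any unit functional, the sums equal 1
  have key : ∀ g : X →L[𝕜] 𝕜, ‖g‖ = 1 →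
      (1 : ℝ) = ∑ j, ‖g (τ j)‖ ^ p ∧ (1 : ℝ) = ∑ k, ‖g (ω k)‖ ^ p := by
    intro g hg
    constructor
    · rw [← hτ g, hg, Real.one_rpow]
    · rw [← hω g, hg, Real.one_rpow]
  -- n and m are positive
  have hn : Nonempty (Fin n) := by
    rw [← Fin.pos_iff_nonempty]
    by_contra h
    have hn0 : n = 0 := by omega
    have := (key g₀ hg₀).1
    subst hn0
    simp at this
  have hm : Nonempty (Fin m) := by
    rw [← Fin.pos_iff_nonempty]
    by_contra h
    have hm0 : m = 0 := by omega
    have := (key g₀ hg₀).2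
    subst hm0
    simp at this
  -- all frame coefficients of unit functionals are ≤ 1
  have hle1 : ∀ g : X →L[𝕜] 𝕜, ‖g‖ = 1 → (∀ j, ‖g (τ j)‖ ≤ 1) ∧ (∀ k, ‖g (ω k)‖ ≤ 1) := by
    intro g hg
    obtain ⟨h1, h2⟩ := key g hg
    constructor
    · intro j
      have : ‖g (τ j)‖ ^ p ≤ 1 := by
        rw [h1]
        exact Finset.single_le_sum (f := fun j => ‖g (τ j)‖ ^ p)
          (fun i _ => by positivity) (Finset.mem_univ j)
      calc ‖g (τ j)‖ = (‖g (τ j)‖ ^ p) ^ (1 / p) := by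
            rw [← Real.rpow_mul (norm_nonneg _), mul_one_div, div_self hp0.ne', Real.rpow_one]
        _ ≤ 1 ^ (1 / p) := Real.rpow_le_rpow (by positivity) this (by positivity)
        _ = 1 := Real.one_rpow _
    · intro k
      have : ‖g (ω k)‖ ^ p ≤ 1 := by
        rw [h2]
        exact Finset.single_le_sum (f := fun k => ‖g (ω k)‖ ^ p)
          (fun i _ => by positivity) (Finset.mem_univ k)
      calc ‖g (ω k)‖ = (‖g (ω k)‖ ^ p) ^ (1 / p) := by
            rw [← Real.rpow_mul (norm_nonneg _), mul_one_div, div_self hp0.ne', Real.rpow_one]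
        _ ≤ 1 ^ (1 / p) := Real.rpow_le_rpow (by positivity) this (by positivity)
        _ = 1 := Real.one_rpow _
  -- choose maximizing indices for g₀
  obtain ⟨j₀, -, hj₀⟩ := Finset.exists_max_image Finset.univ (fun j => ‖g₀ (τ j)‖)
    (Finset.univ_nonempty)
  obtain ⟨k₀, -, hk₀⟩ := Finset.exists_max_image Finset.univ (fun k => ‖g₀ (ω k)‖)
    (Finset.univ_nonempty)
  set a := ‖g₀ (τ j₀)‖ with ha_def
  set b := ‖g₀ (ω k₀)‖ with hb_def
  have ha : 0 ≤ a := norm_nonneg _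
  have hb : 0 ≤ b := norm_nonneg _
  obtain ⟨h1, h2⟩ := key g₀ hg₀
  -- 1 ≤ n * a^p
  have han : (1 : ℝ) ≤ n * a ^ p := by
    calc (1 : ℝ) = ∑ j, ‖g₀ (τ j)‖ ^ p := h1
      _ ≤ ∑ _j : Fin n, a ^ p := Finset.sum_le_sum (fun j _ =>
          Real.rpow_le_rpow (norm_nonneg _) (hj₀ j (Finset.mem_univ j)) hp0.le)
      _ = n * a ^ p := by rw [Finset.sum_const, Finset.card_univ, Fintype.card_fin, nsmul_eq_mul]
  have hbm : (1 : ℝ) ≤ m * b ^ p := by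
    calc (1 : ℝ) = ∑ k, ‖g₀ (ω k)‖ ^ p := h2
      _ ≤ ∑ _k : Fin m, b ^ p := Finset.sum_le_sum (fun k _ =>
          Real.rpow_le_rpow (norm_nonneg _) (hk₀ k (Finset.mem_univ k)) hp0.le)
      _ = m * b ^ p := by rw [Finset.sum_const, Finset.card_univ, Fintype.card_fin, nsmul_eq_mul]
  have hnpos : (0 : ℝ) < n := by exact_mod_cast Fin.pos_iff_nonempty.mpr hn
  have hmpos : (0 : ℝ) < m := by exact_mod_cast Fin.pos_iff_nonempty.mpr hm
  -- a ≥ (1/n)^(1/p), b ≥ (1/m)^(1/p)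
  have haL : ((1 : ℝ) / n) ^ (1 / p) ≤ a :=
    aux_rpow_inv_le p hp0 ha (by positivity) (by rw [div_le_iff₀ hnpos] at *; linarith [han])
  have hbL : ((1 : ℝ) / m) ^ (1 / p) ≤ b :=
    aux_rpow_inv_le p hp0 hb (by positivity) (by rw [div_le_iff₀ hmpos] at *; linarith [hbm])
  have hprod : 1 / ((n * m : ℝ) ^ (1 / p)) ≤ a * b := by
    have : (1 / ((n : ℝ) * m)) ^ (1 / p) = ((1 : ℝ) / n) ^ (1 / p) * ((1 : ℝ) / m) ^ (1 / p) := by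
      rw [← Real.mul_rpow (by positivity) (by positivity)]
      ring_nf
    calc 1 / ((n * m : ℝ) ^ (1 / p)) = (1 / ((n : ℝ) * m)) ^ (1 / p) := by
          rw [one_div, one_div, ← Real.inv_rpow (by positivity), inv_eq_one_div]
      _ = ((1 : ℝ) / n) ^ (1 / p) * ((1 : ℝ) / m) ^ (1 / p) := this
      _ ≤ a * b := mul_le_mul haL hbL (by positivity) ha
  -- now chain through the suprema
  set F : {g : X →L[𝕜] 𝕜 // ‖g‖ = 1} → ℝ :=
    fun g => ⨆ j, ⨆ k, ‖(g : X →L[𝕜] 𝕜) (τ j)‖ * ‖(g : X →L[𝕜] 𝕜) (ω k)‖ with hF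
  have hbdd : BddAbove (Set.range F) := by
    refine ⟨1, ?_⟩
    rintro _ ⟨g, rfl⟩
    obtain ⟨hg1, hg2⟩ := hle1 g g.2
    exact ciSup_le fun j => ciSup_le fun k =>
      mul_le_one₀ (hg1 j) (norm_nonneg _) (hg2 k)
  have hg₀' : F ⟨g₀, hg₀⟩ ≤ ⨆ g, F g := le_ciSup hbdd ⟨g₀, hg₀⟩
  refine le_trans ?_ hg₀'
  refine le_trans hprod ?_
  have step1 : a * b ≤ ⨆ k, ‖g₀ (τ j₀)‖ * ‖g₀ (ω k)‖ :=
    le_ciSup (f := fun k => ‖g₀ (τ j₀)‖ * ‖g₀ (ω k)‖) (Set.finite_range _).bddAbove k₀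
  refine le_trans step1 ?_
  exact le_ciSup (f := fun j => ⨆ k, ‖g₀ (τ j)‖ * ‖g₀ (ω k)‖)
    (Set.finite_range _).bddAbove j₀
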